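/- Let T > 0, let λ : ℝ → ℝ be continuously differentiable and strictly positive on [0,T], and let λ_θ : ℝ → ℝ be twice continuously differentiable and strictly positive on [0,T]. Set g(t) = λ'(t)/λ(t) and g_θ(t) = λ_θ'(t)/λ_θ(t). For each N ≥ 1, let S_N = {t ∈ ℝ^N : 0 ≤ t_1 ≤ ⋯ ≤ t_N ≤ T}, let p_N(t) = (∏_{n=1}^N λ(t_n))·exp(−∫_0^T λ(s) ds), and for each n ∈ {1,…,N} let h_{N,n} : ℝ^N → ℝ be continuously differentiable and satisfy, for every t ∈ S_N, h_{N,n}(t) = 0 whenever t_n = t_{n−1} and whenever t_n = t_{n+1}, with the conventions t_0 = 0 and t_{N+1} = T. Assume each of the following series over N ≥ 1 converges absolutely: ∑_N ∫_{S_N} p_N(t)·∑_n (g(t_n) − g_θ(t_n))²·h_{N,n}(t) dt, ∑_N ∫_{S_N} p_N(t)·∑_n ((1/2)·g_θ(t_n)²·h_{N,n}(t) + g_θ'(t_n)·h_{N,n}(t) + g_θ(t_n)·(∂h_{N,n}/∂t_n)(t)) dt, and ∑_N ∫_{S_N} p_N(t)·∑_n g(t_n)²·h_{N,n}(t) dt.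 Then (1/2)·∑_{N≥1} ∫_{S_N} p_N(t)·∑_n (g(t_n) − g_θ(t_n))²·h_{N,n}(t) dt = ∑_{N≥1} ∫_{S_N} p_N(t)·∑_n ((1/2)·g_θ(t_n)²·h_{N,n}(t) + g_θ'(t_n)·h_{N,n}(t) + g_θ(t_n)·(∂h_{N,n}/∂t_n)(t)) dt + (1/2)·∑_{N≥1} ∫_{S_N} p_N(t)·∑_n g(t_n)²·h_{N,n}(t) dt. -/

import Mathlib

open MeasureTheory Real Set

/-- The ordered simplex `S_N = {t ∈ ℝ^N : 0 ≤ t 1 ≤ ⋯ ≤ t N ≤ T}`. -/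
def ordSimplex (N : ℕ) (T : ℝ) : Set (Fin N → ℝ) :=
  {t | Monotone t ∧ ∀ i, t i ∈ Set.Icc 0 T}

/-- The Poisson density on the ordered simplex:
`p_N t = (∏ n, lam (t n)) · exp (-∫_0^T lam)`. -/
noncomputable def poissonDensity (lam : ℝ → ℝ) (T : ℝ) {N : ℕ} (t : Fin N → ℝ) : ℝ :=
  (∏ n, lam (t n)) * Real.exp (-(∫ s in (0:ℝ)..T, lam s))

section Aux

variable {M : ℕ} {T : ℝ}

lemma isClosed_ordSimplex (N : ℕ) (T : ℝ) : IsClosed (ordSimplex N T) := by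
  have : ordSimplex N T =
      (⋂ (i : Fin N) (j : Fin N) (_ : i ≤ j), {t : Fin N → ℝ | t i ≤ t j}) ∩
        ⋂ i : Fin N, {t : Fin N → ℝ | t i ∈ Set.Icc 0 T} := by
    ext t
    simp only [ordSimplex, Set.mem_setOf_eq, Set.mem_inter_iff, Set.mem_iInter]
    exact ⟨fun h => ⟨fun i j hij => h.1 hij, h.2⟩, fun h => ⟨fun i j hij => h.1 i j hij, h.2⟩⟩
  rw [this]
  exact IsClosed.inter
    (isClosed_iInter fun i => isClosed_iInter fun j => isClosed_iInter fun _ =>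
      isClosed_le (continuous_apply i) (continuous_apply j))
    (isClosed_iInter fun i => IsClosed.preimage (continuous_apply i) isClosed_Icc)

lemma isCompact_ordSimplex (N : ℕ) (T : ℝ) : IsCompact (ordSimplex N T) := by
  refine IsCompact.of_isClosed_subset
    (isCompact_univ_pi (s := fun _ : Fin N => Set.Icc (0:ℝ) T) fun _ => isCompact_Icc)
    (isClosed_ordSimplex N T) ?_
  intro t ht
  exact fun i _ => ht.2 i

lemma measurableSet_ordSimplex (N : ℕ) (T : ℝ) : MeasurableSet (ordSimplex N T) :=
  (isClosed_ordSimplex N T).measurableSet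

lemma contOn_comp_eval {N : ℕ} (n : Fin N) {φ : ℝ → ℝ} (hφ : ContinuousOn φ (Set.Icc 0 T)) :
    ContinuousOn (fun t : Fin N → ℝ => φ (t n)) (ordSimplex N T) :=
  hφ.comp ((continuous_apply n).continuousOn) (fun _ ht => ht.2 n)

/-- evaluation of `insertNth` below the inserted index -/
lemma insertNth_castSucc (n : Fin (M + 1)) (y : ℝ) (s : Fin M → ℝ) (j : Fin M)
    (hj : j.castSucc < n) : Fin.insertNth (α := fun _ => ℝ) n y s j.castSucc = s j := by
  rw [← Fin.succAbove_of_castSucc_lt n j hj, Fin.insertNth_apply_succAbove]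

/-- evaluation of `insertNth` above the inserted index -/
lemma insertNth_succ (n : Fin (M + 1)) (y : ℝ) (s : Fin M → ℝ) (j : Fin M)
    (hj : n ≤ j.castSucc) : Fin.insertNth (α := fun _ => ℝ) n y s j.succ = s j := by
  rw [← Fin.succAbove_of_le_castSucc n j hj, Fin.insertNth_apply_succAbove]

/-- lower end of the slice interval -/
noncomputable def lowEnd (M : ℕ) (n : Fin (M + 1)) (s : Fin M → ℝ) : ℝ :=
  if h : (n : ℕ) = 0 then 0 else s ⟨(n : ℕ) - 1, by have := n.isLt; omega⟩

/-- upper end of the slice interval -/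
noncomputable def highEnd (T : ℝ) (M : ℕ) (n : Fin (M + 1)) (s : Fin M → ℝ) : ℝ :=
  if h : (n : ℕ) = M then T else s ⟨(n : ℕ), by have := n.isLt; omega⟩

lemma lowEnd_nonneg (n : Fin (M + 1)) {s : Fin M → ℝ} (hs : s ∈ ordSimplex M T) :
    0 ≤ lowEnd M n s := by
  unfold lowEnd; split
  · exact le_refl 0
  · exact (hs.2 _).1

lemma highEnd_le (hT : 0 ≤ T) (n : Fin (M + 1)) {s : Fin M → ℝ} (hs : s ∈ ordSimplex M T) :
    highEnd T M n s ≤ T := by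
  unfold highEnd; split
  · exact le_refl T
  · exact (hs.2 _).2

lemma lowEnd_le_highEnd (hT : 0 ≤ T) (n : Fin (M + 1)) {s : Fin M → ℝ}
    (hs : s ∈ ordSimplex M T) : lowEnd M n s ≤ highEnd T M n s := by
  unfold lowEnd highEnd
  by_cases h0 : (n : ℕ) = 0 <;> by_cases hM : (n : ℕ) = M
  · rw [dif_pos h0, dif_pos hM]; exact hT
  · rw [dif_pos h0, dif_neg hM]; exact (hs.2 _).1
  · rw [dif_neg h0, dif_pos hM]; exact (hs.2 _).2
  · rw [dif_neg h0, dif_neg hM]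
    exact hs.1 (by simp only [Fin.mk_le_mk]; omega)

lemma insertNth_mem_ordSimplex (hT : 0 ≤ T) (n : Fin (M + 1)) {s : Fin M → ℝ}
    (hs : s ∈ ordSimplex M T) {y : ℝ} (hy : y ∈ Set.Icc (lowEnd M n s) (highEnd T M n s)) :
    n.insertNth y s ∈ ordSimplex (M + 1) T := by
  have h0a : 0 ≤ lowEnd M n s := lowEnd_nonneg n hs
  have hbT : highEnd T M n s ≤ T := highEnd_le hT n hs
  constructor
  · rw [Fin.monotone_iff_le_succ]
    intro k
    rcases lt_trichotomy k.castSucc n with hlt | heq | hgt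
    · rw [insertNth_castSucc n y s k hlt]
      have hksn : k.succ ≤ n := Fin.castSucc_lt_iff_succ_le.1 hlt
      rcases eq_or_lt_of_le hksn with heq2 | hlt2
      · rw [heq2, Fin.insertNth_apply_same]
        have hn0 : (n : ℕ) ≠ 0 := by
          have : (k : ℕ) + 1 = (n : ℕ) := by
            have := congrArg Fin.val heq2; simpa using this
          omega
        have : s k = lowEnd M n s := by
          unfold lowEnd
          rw [dif_neg hn0]
          congr 1
          have : (k : ℕ) + 1 = (n : ℕ) := by
            have := congrArg Fin.val heq2; simpa using this
          exact Fin.ext (by simp only []; omega)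
        rw [this]; exact hy.1
      · have hk1M : (k : ℕ) + 1 < M := by
          have h1 : (k : ℕ) + 1 < (n : ℕ) := by simpa [Fin.lt_def] using hlt2
          have := n.isLt; omega
        have hcs : (⟨(k : ℕ) + 1, hk1M⟩ : Fin M).castSucc = k.succ := Fin.ext (by simp)
        rw [← hcs, insertNth_castSucc n y s _ (by rw [hcs]; exact hlt2)]
        exact hs.1 (by simp only [Fin.mk_le_mk, Fin.le_def]; omega)
    · rw [heq, Fin.insertNth_apply_same, insertNth_succ n y s k (le_of_eq heq.symm)]
      have hnM : (n : ℕ) ≠ M := by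
        have : (n : ℕ) = (k : ℕ) := by
          have := congrArg Fin.val heq; simpa using this.symm
        have := k.isLt; omega
      have : s k = highEnd T M n s := by
        unfold highEnd
        rw [dif_neg hnM]
        congr 1
        have : (n : ℕ) = (k : ℕ) := by
          have := congrArg Fin.val heq; simpa using this.symm
        exact Fin.ext (by simp only []; omega)
      rw [this]; exact hy.2
    · rw [insertNth_succ n y s k (le_of_lt hgt)]
      have hk0 : 0 < (k : ℕ) := by
        have : (n : ℕ) < (k : ℕ) := by simpa [Fin.lt_def] using hgt
        omega
      have hkM : (k : ℕ) - 1 < M := by have := k.isLt; omega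
      have hsc : (⟨(k : ℕ) - 1, hkM⟩ : Fin M).succ = k.castSucc :=
        Fin.ext (by simp only [Fin.val_succ, Fin.coe_castSucc]; omega)
      rw [← hsc, insertNth_succ n y s _ (by
        have : (n : ℕ) < (k : ℕ) := by simpa [Fin.lt_def] using hgt
        simp only [Fin.le_def, Fin.coe_castSucc, Fin.val_succ]
        omega)]
      exact hs.1 (by simp only [Fin.le_def, Fin.mk_le_mk]; omega)
  · refine (Fin.forall_iff_succAbove n).2 ⟨?_, fun j => ?_⟩
    · rw [Fin.insertNth_apply_same]
      exact ⟨le_trans h0a hy.1, le_trans hy.2 hbT⟩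
    · rw [Fin.insertNth_apply_succAbove]
      exact hs.2 j

lemma proj_mem_ordSimplex (n : Fin (M + 1)) {s : Fin M → ℝ} {y : ℝ}
    (ht : n.insertNth y s ∈ ordSimplex (M + 1) T) : s ∈ ordSimplex M T := by
  constructor
  · intro j1 j2 hle
    have := ht.1 ((Fin.strictMono_succAbove n).monotone hle)
    rwa [Fin.insertNth_apply_succAbove, Fin.insertNth_apply_succAbove] at this
  · intro j
    have := ht.2 (n.succAbove j)
    rwa [Fin.insertNth_apply_succAbove] at this

lemma mem_ordSimplex_iff_slice (hT : 0 ≤ T) (n : Fin (M + 1)) {s : Fin M → ℝ}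
    (hs : s ∈ ordSimplex M T) (y : ℝ) :
    n.insertNth y s ∈ ordSimplex (M + 1) T ↔
      y ∈ Set.Icc (lowEnd M n s) (highEnd T M n s) := by
  refine ⟨fun ht => ⟨?_, ?_⟩, fun hy => insertNth_mem_ordSimplex hT n hs hy⟩
  · unfold lowEnd
    split
    · next h0 =>
      have := (ht.2 n).1
      rwa [Fin.insertNth_apply_same] at this
    · next h0 =>
      have hjM : (n : ℕ) - 1 < M := by have := n.isLt; omega
      set j : Fin M := ⟨(n : ℕ) - 1, hjM⟩
      have hjlt : j.castSucc < n := Fin.lt_def.2 (by show (n : ℕ) - 1 < n; omega)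
      have h1 : s j = Fin.insertNth (α := fun _ => ℝ) n y s j.castSucc := (insertNth_castSucc n y s j hjlt).symm
      have h2 := ht.1 (le_of_lt hjlt)
      rw [Fin.insertNth_apply_same] at h2
      rw [h1]; exact h2
  · unfold highEnd
    split
    · next h0 =>
      have := (ht.2 n).2
      rwa [Fin.insertNth_apply_same] at this
    · next h0 =>
      have hjM : (n : ℕ) < M := by have := n.isLt; omega
      set j : Fin M := ⟨(n : ℕ), hjM⟩
      have hjle : n ≤ j.castSucc := by simp [Fin.le_def, j]
      have h1 : s j = Fin.insertNth (α := fun _ => ℝ) n y s j.succ := (insertNth_succ n y s j hjle).symm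
      have h2 := ht.1 (show n ≤ j.succ from Fin.le_def.2 (by show (n : ℕ) ≤ (n : ℕ) + 1; omega))
      rw [Fin.insertNth_apply_same] at h2
      rw [h1]; exact h2

lemma continuous_insertNth (n : Fin (M + 1)) (s : Fin M → ℝ) :
    Continuous (fun z : ℝ => Fin.insertNth (α := fun _ => ℝ) n z s) := by
  have hfe : (fun z : ℝ => Fin.insertNth (α := fun _ => ℝ) n z s)
      = fun z : ℝ => z • (Pi.single n (1 : ℝ) : Fin (M + 1) → ℝ)
        + Fin.insertNth (α := fun _ => ℝ) n 0 s := by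
    funext z
    ext i
    rcases eq_or_ne i n with rfl | hne
    · simp
    · obtain ⟨j, rfl⟩ := Fin.exists_succAbove_eq hne
      simp [Fin.insertNth_apply_succAbove, Pi.single_eq_of_ne (Fin.succAbove_ne n j)]
  rw [hfe]
  exact (continuous_id.smul continuous_const).add continuous_const

lemma hasDerivAt_insertNth (n : Fin (M + 1)) (s : Fin M → ℝ) (y : ℝ) :
    HasDerivAt (fun z : ℝ => Fin.insertNth (α := fun _ => ℝ) n z s) (Pi.single n (1 : ℝ)) y := by
  have hfe : (fun z : ℝ => Fin.insertNth (α := fun _ => ℝ) n z s)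
      = fun z : ℝ => z • (Pi.single n (1 : ℝ) : Fin (M + 1) → ℝ)
        + Fin.insertNth (α := fun _ => ℝ) n 0 s := by
    funext z
    ext i
    rcases eq_or_ne i n with rfl | hne
    · simp
    · obtain ⟨j, rfl⟩ := Fin.exists_succAbove_eq hne
      simp [Fin.insertNth_apply_succAbove, Pi.single_eq_of_ne (Fin.succAbove_ne n j)]
  rw [hfe]
  simpa using ((hasDerivAt_id y).smul_const (Pi.single n (1 : ℝ) : Fin (M + 1) → ℝ)).add_const
    (Fin.insertNth (α := fun _ => ℝ) n 0 s)

end Aux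

section Key

variable {T : ℝ} {lam lam' lamθ lamθ' lamθ'' : ℝ → ℝ}

/-- the per-coordinate divergence integrand -/
noncomputable def Dint (lam lam' lamθ lamθ' lamθ'' : ℝ → ℝ) (T : ℝ) {N : ℕ}
    (h : (Fin N → ℝ) → ℝ) (n : Fin N) (t : Fin N → ℝ) : ℝ :=
  poissonDensity lam T t *
    ((lam' (t n) / lam (t n)) * (lamθ' (t n) / lamθ (t n)) * h t
      + (lamθ'' (t n) / lamθ (t n) - (lamθ' (t n) / lamθ (t n)) ^ 2) * h t
      + (lamθ' (t n) / lamθ (t n)) * fderiv ℝ h t (Pi.single n 1))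

lemma contOn_Dint (hlam : ∀ t ∈ Set.Icc 0 T, HasDerivAt lam (lam' t) t)
    (hlam'c : ContinuousOn lam' (Set.Icc 0 T))
    (hlampos : ∀ t ∈ Set.Icc 0 T, 0 < lam t)
    (hlamθ : ∀ t ∈ Set.Icc 0 T, HasDerivAt lamθ (lamθ' t) t)
    (hlamθ' : ∀ t ∈ Set.Icc 0 T, HasDerivAt lamθ' (lamθ'' t) t)
    (hlamθ''c : ContinuousOn lamθ'' (Set.Icc 0 T))
    (hlamθpos : ∀ t ∈ Set.Icc 0 T, 0 < lamθ t)
    {N : ℕ} (h : (Fin N → ℝ) → ℝ) (hh : ContDiff ℝ 1 h) (n : Fin N) :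
    ContinuousOn (Dint lam lam' lamθ lamθ' lamθ'' T h n) (ordSimplex N T) := by
  have hlamc : ContinuousOn lam (Set.Icc 0 T) :=
    fun x hx => (hlam x hx).continuousAt.continuousWithinAt
  have hlamθc : ContinuousOn lamθ (Set.Icc 0 T) :=
    fun x hx => (hlamθ x hx).continuousAt.continuousWithinAt
  have hlamθ'c : ContinuousOn lamθ' (Set.Icc 0 T) :=
    fun x hx => (hlamθ' x hx).continuousAt.continuousWithinAt
  have hp : ContinuousOn (poissonDensity lam T (N := N)) (ordSimplex N T) := by
    apply ContinuousOn.mul _ continuousOn_const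
    exact continuousOn_finset_prod _ fun i _ => contOn_comp_eval i hlamc
  have hlamne : ∀ t ∈ ordSimplex N T, lam (t n) ≠ 0 :=
    fun t ht => ne_of_gt (hlampos _ (ht.2 n))
  have hlamθne : ∀ t ∈ ordSimplex N T, lamθ (t n) ≠ 0 :=
    fun t ht => ne_of_gt (hlamθpos _ (ht.2 n))
  have hg : ContinuousOn (fun t : Fin N → ℝ => lam' (t n) / lam (t n)) (ordSimplex N T) :=
    (contOn_comp_eval n hlam'c).div (contOn_comp_eval n hlamc) hlamne
  have hq : ContinuousOn (fun t : Fin N → ℝ => lamθ' (t n) / lamθ (t n)) (ordSimplex N T) :=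
    (contOn_comp_eval n hlamθ'c).div (contOn_comp_eval n hlamθc) hlamθne
  have hr : ContinuousOn (fun t : Fin N → ℝ => lamθ'' (t n) / lamθ (t n)) (ordSimplex N T) :=
    (contOn_comp_eval n hlamθ''c).div (contOn_comp_eval n hlamθc) hlamθne
  have hhc : ContinuousOn h (ordSimplex N T) := hh.continuous.continuousOn
  have hfd : ContinuousOn (fun t : Fin N → ℝ => fderiv ℝ h t (Pi.single n 1))
      (ordSimplex N T) :=
    ((hh.continuous_fderiv one_ne_zero).clm_apply continuous_const).continuousOn
  exact hp.mul (((hg.mul hq).mul hhc).add ((hr.sub (hq.pow 2)).mul hhc) |>.add (hq.mul hfd))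

lemma key_zero (hT : 0 < T)
    (hlam : ∀ t ∈ Set.Icc 0 T, HasDerivAt lam (lam' t) t)
    (hlam'c : ContinuousOn lam' (Set.Icc 0 T))
    (hlampos : ∀ t ∈ Set.Icc 0 T, 0 < lam t)
    (hlamθ : ∀ t ∈ Set.Icc 0 T, HasDerivAt lamθ (lamθ' t) t)
    (hlamθ' : ∀ t ∈ Set.Icc 0 T, HasDerivAt lamθ' (lamθ'' t) t)
    (hlamθ''c : ContinuousOn lamθ'' (Set.Icc 0 T))
    (hlamθpos : ∀ t ∈ Set.Icc 0 T, 0 < lamθ t)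
    {M : ℕ} (n : Fin (M + 1)) (h : (Fin (M + 1) → ℝ) → ℝ) (hh : ContDiff ℝ 1 h)
    (hv0 : ∀ t ∈ ordSimplex (M + 1) T, (n : ℕ) = 0 → t n = 0 → h t = 0)
    (hvp : ∀ t ∈ ordSimplex (M + 1) T, ∀ m : Fin (M + 1),
      (m : ℕ) + 1 = (n : ℕ) → t n = t m → h t = 0)
    (hvn : ∀ t ∈ ordSimplex (M + 1) T, ∀ m : Fin (M + 1),
      (n : ℕ) + 1 = (m : ℕ) → t n = t m → h t = 0)
    (hvT : ∀ t ∈ ordSimplex (M + 1) T, (n : ℕ) = M → t n = T → h t = 0) :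
    ∫ t in ordSimplex (M + 1) T, Dint lam lam' lamθ lamθ' lamθ'' T h n t = 0 := by
  set S := ordSimplex (M + 1) T with hSdef
  set D := Dint lam lam' lamθ lamθ' lamθ'' T h n with hDdef
  have hDc : ContinuousOn D S :=
    contOn_Dint hlam hlam'c hlampos hlamθ hlamθ' hlamθ''c hlamθpos h hh n
  have hSm : MeasurableSet S := measurableSet_ordSimplex (M + 1) T
  have hInt : IntegrableOn D S := hDc.integrableOn_compact (isCompact_ordSimplex (M + 1) T)
  have hGint : Integrable (S.indicator D) := hInt.integrable_indicator hSm
  rw [← integral_indicator hSm]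
  set e := MeasurableEquiv.piFinSuccAbove (fun _ : Fin (M + 1) => ℝ) n with hedef
  have mp := MeasureTheory.volume_preserving_piFinSuccAbove (fun _ : Fin (M + 1) => ℝ) n
  rw [← MeasurePreserving.integral_comp (MeasurePreserving.symm e mp) e.symm.measurableEmbedding (S.indicator D)]
  have hesymm : ∀ (y : ℝ) (s : Fin M → ℝ), e.symm (y, s) = n.insertNth y s := by
    intro y s; rfl
  have hint2 : Integrable (fun p : ℝ × (Fin M → ℝ) => S.indicator D (e.symm p)) :=
    ((MeasurePreserving.symm e mp).integrable_comp_emb e.symm.measurableEmbedding).2 hGint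
  rw [MeasureTheory.Measure.volume_eq_prod] at hint2 ⊢
  rw [MeasureTheory.integral_prod _ hint2]
  rw [MeasureTheory.integral_integral_swap hint2]
  have inner : ∀ s : Fin M → ℝ, (∫ y : ℝ, S.indicator D (e.symm (y, s))) = 0 := by
    intro s
    have hind : (fun y : ℝ => S.indicator D (e.symm (y, s)))
        = fun y : ℝ => ((fun y : ℝ => n.insertNth y s) ⁻¹' S).indicator
              (fun y => D (n.insertNth y s)) y := by
      funext y
      rw [hesymm]
      by_cases hy : n.insertNth y s ∈ S <;>
        simp [Set.indicator_apply, hy]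
    rw [hind]
    by_cases hsS : s ∈ ordSimplex M T
    · -- slice is an interval
      set a := lowEnd M n s with hadef
      set b := highEnd T M n s with hbdef
      have hab : a ≤ b := lowEnd_le_highEnd hT.le n hsS
      have hpre : (fun y : ℝ => n.insertNth y s) ⁻¹' S = Set.Icc a b := by
        ext y
        rw [Set.mem_preimage]
        exact mem_ordSimplex_iff_slice hT.le n hsS y
      rw [hpre, integral_indicator measurableSet_Icc, integral_Icc_eq_integral_Ioc,
        ← intervalIntegral.integral_of_le hab]
      -- FTC
      set Fy : ℝ → ℝ := fun z =>
        poissonDensity lam T (n.insertNth z s) * (lamθ' z / lamθ z) * h (n.insertNth z s)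
        with hFydef
      have hIccsub : Set.Icc a b ⊆ Set.Icc 0 T :=
        Set.Icc_subset_Icc (lowEnd_nonneg n hsS) (highEnd_le hT.le n hsS)
      have hmapsto : ∀ y ∈ Set.Icc a b, n.insertNth y s ∈ S := fun y hy =>
        insertNth_mem_ordSimplex hT.le n hsS hy
      have hderiv : ∀ y ∈ Set.uIcc a b, HasDerivAt Fy (D (n.insertNth y s)) y := by
        intro y hy
        rw [Set.uIcc_of_le hab] at hy
        have hyT : y ∈ Set.Icc 0 T := hIccsub hy
        have hlamne : lam y ≠ 0 := ne_of_gt (hlampos y hyT)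
        have hlamθne : lamθ y ≠ 0 := ne_of_gt (hlamθpos y hyT)
        set P : ℝ := ∏ j, lam (s j) with hPdef
        set C : ℝ := Real.exp (-(∫ u in (0:ℝ)..T, lam u)) with hCdef
        have hFy2 : Fy = fun z =>
            ((lam z * P * C) * (lamθ' z / lamθ z)) * h (n.insertNth z s) := by
          funext z
          rw [hFydef]
          simp only [poissonDensity]
          rw [Fin.prod_univ_succAbove (fun i => lam (Fin.insertNth (α := fun _ => ℝ) n z s i)) n]
          simp only [Fin.insertNth_apply_same, Fin.insertNth_apply_succAbove]
          rfl
        have hins := hasDerivAt_insertNth n s y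
        have hcomp : HasDerivAt (fun z => h (n.insertNth z s))
            (fderiv ℝ h (n.insertNth y s) (Pi.single n 1)) y :=
          ((hh.differentiable one_ne_zero).differentiableAt.hasFDerivAt).comp_hasDerivAt y hins
        have hA : HasDerivAt (fun z => lam z * P * C) (lam' y * P * C) y :=
          ((hlam y hyT).mul_const P).mul_const C
        have hq : HasDerivAt (fun z => lamθ' z / lamθ z)
            ((lamθ'' y * lamθ y - lamθ' y * lamθ' y) / lamθ y ^ 2) y :=
          (hlamθ' y hyT).div (hlamθ y hyT) hlamθne
        have hAq : HasDerivAt (fun z => lam z * P * C * (lamθ' z / lamθ z)) _ y := hA.mul hq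
        have hall : HasDerivAt (fun z => lam z * P * C * (lamθ' z / lamθ z) * h (n.insertNth z s)) _ y :=
          hAq.mul hcomp
        rw [hFy2]
        convert hall using 1
        simp only [hDdef, Dint, poissonDensity]
        rw [Fin.prod_univ_succAbove (fun i => lam (Fin.insertNth (α := fun _ => ℝ) n y s i)) n]
        simp only [Fin.insertNth_apply_same, Fin.insertNth_apply_succAbove]
        field_simp
        ring
      have hcont : ContinuousOn (fun y => D (n.insertNth y s)) (Set.uIcc a b) := by
        rw [Set.uIcc_of_le hab]
        exact hDc.comp (continuous_insertNth n s).continuousOn hmapsto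
      have hii : IntervalIntegrable (fun y => D (n.insertNth y s)) volume a b :=
        hcont.intervalIntegrable
      rw [intervalIntegral.integral_eq_sub_of_hasDerivAt hderiv hii]
      have hta : n.insertNth a s ∈ S := hmapsto a ⟨le_refl a, hab⟩
      have htb : n.insertNth b s ∈ S := hmapsto b ⟨hab, le_refl b⟩
      have hFa : Fy a = 0 := by
        have hha : h (n.insertNth a s) = 0 := by
          by_cases h0 : (n : ℕ) = 0
          · refine hv0 _ hta h0 ?_
            rw [Fin.insertNth_apply_same, hadef]
            unfold lowEnd
            rw [dif_pos h0]
          · have hjM : (n : ℕ) - 1 < M := by have := n.isLt; omega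
            set j : Fin M := ⟨(n : ℕ) - 1, hjM⟩ with hjdef
            set m : Fin (M + 1) := j.castSucc with hmdef
            refine hvp _ hta m (by simp [hmdef, hjdef]; omega) ?_
            rw [Fin.insertNth_apply_same, hmdef,
              insertNth_castSucc n a s j (Fin.lt_def.2 (by show (n : ℕ) - 1 < n; omega))]
            rw [hadef]
            unfold lowEnd
            rw [dif_neg h0]
        simp [hFydef, hha]
      have hFb : Fy b = 0 := by
        have hhb : h (n.insertNth b s) = 0 := by
          by_cases h0 : (n : ℕ) = M
          · refine hvT _ htb h0 ?_
            rw [Fin.insertNth_apply_same, hbdef]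
            unfold highEnd
            rw [dif_pos h0]
          · have hjM : (n : ℕ) < M := by have := n.isLt; omega
            set j : Fin M := ⟨(n : ℕ), hjM⟩ with hjdef
            set m : Fin (M + 1) := j.succ with hmdef
            refine hvn _ htb m (by simp [hmdef, hjdef]) ?_
            rw [Fin.insertNth_apply_same, hmdef,
              insertNth_succ n b s j (by simp [Fin.le_def, hjdef])]
            rw [hbdef]
            unfold highEnd
            rw [dif_neg h0]
        simp [hFydef, hhb]
      rw [hFa, hFb, sub_zero]
    · -- slice is empty
      have hpre : (fun y : ℝ => n.insertNth y s) ⁻¹' S = ∅ := by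
        ext y
        simp only [Set.mem_preimage, Set.mem_empty_iff_false, iff_false]
        intro hmem
        exact hsS (proj_mem_ordSimplex n hmem)
      rw [hpre]
      simp
  simp only [inner, integral_zero]

end Key

/-- weighted score matching for Poisson processes: with weights `h M n`
vanishing on all boundary facets of the coordinate ranges of the ordered simplex (with
conventions `t 0 = 0`, `t (N+1) = T`), and assuming absolute convergence of the series
over the number of events `N = M + 1 ≥ 1`, the explicit weighted score-matching
objective equals the implicit one plus a constant not depending on the model intensity
`lamθ`, with no boundary terms.  Here the data score is `g = lam'/lam`, the model score
is `gθ = lamθ'/lamθ`, and `gθ' = lamθ''/lamθ - (lamθ'/lamθ)²`. -/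
theorem stmt_15 (T : ℝ) (hT : 0 < T)
    (lam lam' lamθ lamθ' lamθ'' : ℝ → ℝ)
    (hlam : ∀ t ∈ Set.Icc 0 T, HasDerivAt lam (lam' t) t)
    (hlam'c : ContinuousOn lam' (Set.Icc 0 T))
    (hlampos : ∀ t ∈ Set.Icc 0 T, 0 < lam t)
    (hlamθ : ∀ t ∈ Set.Icc 0 T, HasDerivAt lamθ (lamθ' t) t)
    (hlamθ' : ∀ t ∈ Set.Icc 0 T, HasDerivAt lamθ' (lamθ'' t) t)
    (hlamθ''c : ContinuousOn lamθ'' (Set.Icc 0 T))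
    (hlamθpos : ∀ t ∈ Set.Icc 0 T, 0 < lamθ t)
    (h : (M : ℕ) → Fin (M + 1) → (Fin (M + 1) → ℝ) → ℝ)
    (hhsmooth : ∀ M n, ContDiff ℝ 1 (h M n))
    (hvanish_zero : ∀ M : ℕ, ∀ t ∈ ordSimplex (M + 1) T, ∀ n : Fin (M + 1),
      (n : ℕ) = 0 → t n = 0 → h M n t = 0)
    (hvanish_prev : ∀ M : ℕ, ∀ t ∈ ordSimplex (M + 1) T, ∀ n m : Fin (M + 1),
      (m : ℕ) + 1 = (n : ℕ) → t n = t m → h M n t = 0)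
    (hvanish_next : ∀ M : ℕ, ∀ t ∈ ordSimplex (M + 1) T, ∀ n m : Fin (M + 1),
      (n : ℕ) + 1 = (m : ℕ) → t n = t m → h M n t = 0)
    (hvanish_T : ∀ M : ℕ, ∀ t ∈ ordSimplex (M + 1) T, ∀ n : Fin (M + 1),
      (n : ℕ) = M → t n = T → h M n t = 0)
    (hS1 : Summable fun M : ℕ => ∫ t in ordSimplex (M + 1) T,
      poissonDensity lam T t * ∑ n : Fin (M + 1),
        (lam' (t n) / lam (t n) - lamθ' (t n) / lamθ (t n))^2 * h M n t)
    (hS2 : Summable fun M : ℕ => ∫ t in ordSimplex (M + 1) T,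
      poissonDensity lam T t * ∑ n : Fin (M + 1),
        ((1/2) * (lamθ' (t n) / lamθ (t n))^2 * h M n t
          + (lamθ'' (t n) / lamθ (t n) - (lamθ' (t n) / lamθ (t n))^2) * h M n t
          + (lamθ' (t n) / lamθ (t n)) * fderiv ℝ (h M n) t (Pi.single n 1)))
    (hS3 : Summable fun M : ℕ => ∫ t in ordSimplex (M + 1) T,
      poissonDensity lam T t * ∑ n : Fin (M + 1),
        (lam' (t n) / lam (t n))^2 * h M n t) :
    (1/2) * ∑' M : ℕ, (∫ t in ordSimplex (M + 1) T,
        poissonDensity lam T t * ∑ n : Fin (M + 1),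
          (lam' (t n) / lam (t n) - lamθ' (t n) / lamθ (t n))^2 * h M n t)
    = (∑' M : ℕ, ∫ t in ordSimplex (M + 1) T,
        poissonDensity lam T t * ∑ n : Fin (M + 1),
          ((1/2) * (lamθ' (t n) / lamθ (t n))^2 * h M n t
            + (lamθ'' (t n) / lamθ (t n) - (lamθ' (t n) / lamθ (t n))^2) * h M n t
            + (lamθ' (t n) / lamθ (t n)) * fderiv ℝ (h M n) t (Pi.single n 1)))
      + (1/2) * (∑' M : ℕ, ∫ t in ordSimplex (M + 1) T,
          poissonDensity lam T t * ∑ n : Fin (M + 1),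
            (lam' (t n) / lam (t n))^2 * h M n t) := by
  classical
  -- helper continuity facts
  have hlamc : ContinuousOn lam (Set.Icc 0 T) :=
    fun x hx => (hlam x hx).continuousAt.continuousWithinAt
  have hlamθc : ContinuousOn lamθ (Set.Icc 0 T) :=
    fun x hx => (hlamθ x hx).continuousAt.continuousWithinAt
  have hlamθ'c : ContinuousOn lamθ' (Set.Icc 0 T) :=
    fun x hx => (hlamθ' x hx).continuousAt.continuousWithinAt
  -- per-M integrands
  set f1 : (M : ℕ) → (Fin (M + 1) → ℝ) → ℝ := fun M t =>
    poissonDensity lam T t * ∑ n : Fin (M + 1),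
      (lam' (t n) / lam (t n) - lamθ' (t n) / lamθ (t n))^2 * h M n t with hf1
  set f2 : (M : ℕ) → (Fin (M + 1) → ℝ) → ℝ := fun M t =>
    poissonDensity lam T t * ∑ n : Fin (M + 1),
      ((1/2) * (lamθ' (t n) / lamθ (t n))^2 * h M n t
        + (lamθ'' (t n) / lamθ (t n) - (lamθ' (t n) / lamθ (t n))^2) * h M n t
        + (lamθ' (t n) / lamθ (t n)) * fderiv ℝ (h M n) t (Pi.single n 1)) with hf2
  set f3 : (M : ℕ) → (Fin (M + 1) → ℝ) → ℝ := fun M t =>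
    poissonDensity lam T t * ∑ n : Fin (M + 1),
      (lam' (t n) / lam (t n))^2 * h M n t with hf3
  -- continuity and integrability of the integrands on the simplex
  have hcont_basic : ∀ (M : ℕ) (n : Fin (M + 1)),
      ContinuousOn (fun t : Fin (M + 1) → ℝ => lam' (t n) / lam (t n))
        (ordSimplex (M + 1) T) ∧
      ContinuousOn (fun t : Fin (M + 1) → ℝ => lamθ' (t n) / lamθ (t n))
        (ordSimplex (M + 1) T) ∧
      ContinuousOn (fun t : Fin (M + 1) → ℝ => lamθ'' (t n) / lamθ (t n))
        (ordSimplex (M + 1) T) := by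
    intro M n
    have hlamne : ∀ t ∈ ordSimplex (M + 1) T, lam (t n) ≠ 0 :=
      fun t ht => ne_of_gt (hlampos _ (ht.2 n))
    have hlamθne : ∀ t ∈ ordSimplex (M + 1) T, lamθ (t n) ≠ 0 :=
      fun t ht => ne_of_gt (hlamθpos _ (ht.2 n))
    exact ⟨(contOn_comp_eval n hlam'c).div (contOn_comp_eval n hlamc) hlamne,
      (contOn_comp_eval n hlamθ'c).div (contOn_comp_eval n hlamθc) hlamθne,
      (contOn_comp_eval n hlamθ''c).div (contOn_comp_eval n hlamθc) hlamθne⟩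
  have hpcont : ∀ M : ℕ,
      ContinuousOn (poissonDensity lam T (N := M + 1)) (ordSimplex (M + 1) T) := by
    intro M
    apply ContinuousOn.mul _ continuousOn_const
    exact continuousOn_finset_prod _ fun i _ => contOn_comp_eval i hlamc
  have hint1 : ∀ M : ℕ, IntegrableOn (f1 M) (ordSimplex (M + 1) T) := by
    intro M
    refine ContinuousOn.integrableOn_compact (isCompact_ordSimplex _ _) ?_
    refine (hpcont M).mul (continuousOn_finset_sum _ fun n _ => ?_)
    exact (((hcont_basic M n).1.sub (hcont_basic M n).2.1).pow 2).mul
      (hhsmooth M n).continuous.continuousOn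
  have hint2 : ∀ M : ℕ, IntegrableOn (f2 M) (ordSimplex (M + 1) T) := by
    intro M
    refine ContinuousOn.integrableOn_compact (isCompact_ordSimplex _ _) ?_
    refine (hpcont M).mul (continuousOn_finset_sum _ fun n _ => ?_)
    refine ContinuousOn.add (ContinuousOn.add ?_ ?_) ?_
    · exact (continuousOn_const.mul ((hcont_basic M n).2.1.pow 2)).mul
        (hhsmooth M n).continuous.continuousOn
    · exact ((hcont_basic M n).2.2.sub ((hcont_basic M n).2.1.pow 2)).mul
        (hhsmooth M n).continuous.continuousOn
    · exact (hcont_basic M n).2.1.mul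
        ((((hhsmooth M n).continuous_fderiv one_ne_zero).clm_apply continuous_const).continuousOn)
  have hint3 : ∀ M : ℕ, IntegrableOn (f3 M) (ordSimplex (M + 1) T) := by
    intro M
    refine ContinuousOn.integrableOn_compact (isCompact_ordSimplex _ _) ?_
    refine (hpcont M).mul (continuousOn_finset_sum _ fun n _ => ?_)
    exact ((hcont_basic M n).1.pow 2).mul (hhsmooth M n).continuous.continuousOn
  have hintD : ∀ (M : ℕ) (n : Fin (M + 1)),
      IntegrableOn (Dint lam lam' lamθ lamθ' lamθ'' T (h M n) n) (ordSimplex (M + 1) T) :=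
    fun M n => (contOn_Dint hlam hlam'c hlampos hlamθ hlamθ' hlamθ''c hlamθpos
      (h M n) (hhsmooth M n) n).integrableOn_compact (isCompact_ordSimplex _ _)
  -- key integration by parts: each divergence term integrates to zero
  have hkey : ∀ (M : ℕ) (n : Fin (M + 1)),
      ∫ t in ordSimplex (M + 1) T, Dint lam lam' lamθ lamθ' lamθ'' T (h M n) n t = 0 := by
    intro M n
    exact key_zero hT hlam hlam'c hlampos hlamθ hlamθ' hlamθ''c hlamθpos n (h M n)
      (hhsmooth M n)
      (fun t ht h0 ht0 => hvanish_zero M t ht n h0 ht0)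
      (fun t ht m hm htm => hvanish_prev M t ht n m hm htm)
      (fun t ht m hm htm => hvanish_next M t ht n m hm htm)
      (fun t ht h0 ht0 => hvanish_T M t ht n h0 ht0)
  -- pointwise algebraic identity
  have hptwise : ∀ (M : ℕ) (t : Fin (M + 1) → ℝ),
      f2 M t + (1/2) * f3 M t - (1/2) * f1 M t
        = ∑ n : Fin (M + 1), Dint lam lam' lamθ lamθ' lamθ'' T (h M n) n t := by
    intro M t
    simp only [hf1, hf2, hf3, Dint, Finset.mul_sum]
    rw [← Finset.sum_add_distrib, ← Finset.sum_sub_distrib]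
    refine Finset.sum_congr rfl fun n _ => ?_
    ring
  -- per-M identity
  have hper : ∀ M : ℕ,
      (1/2) * (∫ t in ordSimplex (M + 1) T, f1 M t)
        = (∫ t in ordSimplex (M + 1) T, f2 M t)
          + (1/2) * (∫ t in ordSimplex (M + 1) T, f3 M t) := by
    intro M
    have hsum0 : ∫ t in ordSimplex (M + 1) T,
        (∑ n : Fin (M + 1), Dint lam lam' lamθ lamθ' lamθ'' T (h M n) n t) = 0 := by
      rw [MeasureTheory.integral_finset_sum _ (fun n _ => hintD M n)]
      simp [hkey M]
    have hcomb : (∫ t in ordSimplex (M + 1) T, f2 M t)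
        + (1/2) * (∫ t in ordSimplex (M + 1) T, f3 M t)
        - (1/2) * (∫ t in ordSimplex (M + 1) T, f1 M t)
        = ∫ t in ordSimplex (M + 1) T,
            (f2 M t + (1/2) * f3 M t - (1/2) * f1 M t) := by
      rw [integral_sub (by exact (hint2 M).add ((hint3 M).const_mul _)) ((hint1 M).const_mul _),
        integral_add (hint2 M) ((hint3 M).const_mul _),
        MeasureTheory.integral_const_mul, MeasureTheory.integral_const_mul]
    have : (∫ t in ordSimplex (M + 1) T, f2 M t)
        + (1/2) * (∫ t in ordSimplex (M + 1) T, f3 M t)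
        - (1/2) * (∫ t in ordSimplex (M + 1) T, f1 M t) = 0 := by
      rw [hcomb]
      rw [show (fun t => f2 M t + (1/2) * f3 M t - (1/2) * f1 M t)
          = fun t => ∑ n : Fin (M + 1), Dint lam lam' lamθ lamθ' lamθ'' T (h M n) n t from
        funext fun t => hptwise M t]
      exact hsum0
    linarith
  -- assemble the series
  have h2 : Summable fun M : ℕ => (1/2) * (∫ t in ordSimplex (M + 1) T, f3 M t) :=
    hS3.mul_left _
  calc (1/2) * ∑' M : ℕ, (∫ t in ordSimplex (M + 1) T, f1 M t)
      = ∑' M : ℕ, (1/2) * (∫ t in ordSimplex (M + 1) T, f1 M t) := tsum_mul_left.symm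
    _ = ∑' M : ℕ, ((∫ t in ordSimplex (M + 1) T, f2 M t)
          + (1/2) * (∫ t in ordSimplex (M + 1) T, f3 M t)) := by
        exact tsum_congr fun M => hper M
    _ = (∑' M : ℕ, ∫ t in ordSimplex (M + 1) T, f2 M t)
          + ∑' M : ℕ, (1/2) * (∫ t in ordSimplex (M + 1) T, f3 M t) := Summable.tsum_add hS2 h2
    _ = (∑' M : ℕ, ∫ t in ordSimplex (M + 1) T, f2 M t)
          + (1/2) * ∑' M : ℕ, (∫ t in ordSimplex (M + 1) T, f3 M t) := by
        rw [tsum_mul_left]
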